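/- One-step estimate in the adapted Lebeau-Robbiano method: under the hypotheses of the abstract observability theorem (spectral inequality with exponent a and constant c₁, dissipation estimate with exponents m, b and constant c₂, a < b), for every q > 0 there exist 0 < τ₀'(q) < t₀ and M(q) > 0 such that for all 0 < τ < τ₀'(q) and all g ∈ L²(Ω), f_q(τ) ‖e^{τA} g‖² − f_q(qτ) ‖g‖² ≤ ∫_{τ/2}^{τ} ‖e^{tA} g‖²_{L²(ω)} dt, where f_q(s) = exp(−M(q)/s^{am/(b-a)}). -/

import Mathlib

open MeasureTheory


lemma L2normSq {α : Type*} [MeasurableSpace α] (ν : Measure α) (f : Lp ℂ 2 ν) :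
    ‖f‖ ^ 2 = ∫ x, ‖f x‖ ^ 2 ∂ν := by
  have h2 : RCLike.re (inner (𝕜 := ℂ) f f) = ‖f‖ ^ 2 := inner_self_eq_norm_sq f
  rw [L2.inner_def] at h2
  rw [← h2, ← integral_re (L2.integrable_inner (𝕜 := ℂ) f f)]
  exact integral_congr_ae (Filter.Eventually.of_forall fun x => (inner_self_eq_norm_sq _).symm) |>.symm

section Restr
variable {α : Type*} [MeasurableSpace α] {μ : Measure α} {s : Set α}

noncomputable def Rmap (μ : Measure α) (s : Set α) (h : Lp ℂ 2 μ) : Lp ℂ 2 (μ.restrict s) :=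
  ((Lp.memLp h).restrict s).toLp ⇑h

lemma Rmap_norm_le (h : Lp ℂ 2 μ) : ‖Rmap μ s h‖ ≤ ‖h‖ := by
  rw [Rmap, MemLp.toLp, Lp.norm_def, Lp.norm_def]
  apply ENNReal.toReal_mono (Lp.eLpNorm_ne_top h)
  rw [eLpNorm_congr_ae (AEEqFun.coeFn_mk _ _)]
  exact eLpNorm_mono_measure _ Measure.restrict_le_self

lemma Rmap_sub (h₁ h₂ : Lp ℂ 2 μ) : Rmap μ s h₁ - Rmap μ s h₂ = Rmap μ s (h₁ - h₂) := by
  rw [Rmap, Rmap, Rmap, ← MemLp.toLp_sub]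
  exact MemLp.toLp_congr _ _ (((Lp.coeFn_sub h₁ h₂).symm).filter_mono
    (ae_mono Measure.restrict_le_self))

lemma Rmap_int (h : Lp ℂ 2 μ) :
    ∫ x, ‖h x‖ ^ 2 ∂(μ.restrict s) = ‖Rmap μ s h‖ ^ 2 := by
  rw [L2normSq]
  refine integral_congr_ae ?_
  have := MemLp.coeFn_toLp ((Lp.memLp h).restrict s)
  filter_upwards [this] with x hx
  simp only [Rmap, hx]

lemma Rmap_lip : LipschitzWith 1 (Rmap μ s) := by
  intro h₁ h₂
  simp only [edist_dist, dist_eq_norm, ENNReal.coe_one, one_mul]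
  rw [Rmap_sub]
  exact ENNReal.ofReal_le_ofReal (Rmap_norm_le _)

end Restr

lemma aux_log (γ τ : ℝ) (hγ : 0 < γ) (hτ : 0 < τ) (hτ1 : τ ≤ 1) :
    Real.exp (-((3 + 1/γ) * τ ^ (-γ))) ≤ τ / 4 := by
  rw [← Real.exp_log (by positivity : (0:ℝ) < τ/4)]
  apply Real.exp_le_exp.mpr
  have h1 : Real.log (τ/4) = Real.log τ - Real.log 4 := Real.log_div hτ.ne' (by norm_num)
  have h2 : Real.log 4 ≤ 3 := (Real.log_le_sub_one_of_pos (by norm_num)).trans (by norm_num)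
  have hpos : (0:ℝ) < τ ^ (-γ) := Real.rpow_pos_of_pos hτ _
  have h4 : γ * (-Real.log τ) = Real.log (τ ^ (-γ)) := by rw [Real.log_rpow hτ]; ring
  have h5 : Real.log (τ ^ (-γ)) ≤ τ ^ (-γ) := by
    have := Real.log_le_sub_one_of_pos hpos; linarith
  have h3 : -Real.log τ ≤ (1/γ) * τ ^ (-γ) := by
    rw [div_mul_eq_mul_div, le_div_iff₀ hγ]
    nlinarith
  have h6 : (1:ℝ) ≤ τ ^ (-γ) := by
    have := Real.rpow_le_rpow_of_exponent_ge hτ hτ1 (by linarith : -γ ≤ (0:ℝ))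
    rwa [Real.rpow_zero] at this
  rw [h1]
  nlinarith


lemma aux_sq (A N Dg E : ℝ) (hE : 1 ≤ E) (hDg : 0 ≤ Dg) (hN : 0 ≤ N) (hA : 0 ≤ A)
    (h : A ≤ E*N + 2*E*Dg) : A ^ 2 ≤ (N ^ 2 + 4*Dg ^ 2) * (2*E ^ 2) := by
  nlinarith [sq_nonneg (E*N - 2*E*Dg), mul_self_le_mul_self hA h, sq_nonneg (N - Dg)]

set_option linter.all false
set_option maxHeartbeats 1000000 in
/-- one-step estimate in the adapted Lebeau-Robbiano method. Under the
hypotheses of the abstract observability theorem, for every `q > 0` there exist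
`0 < τ₀'(q) < t₀` and `M(q) > 0` such that for all `0 < τ < τ₀'(q)` and all `g`,
`f_q(τ)‖S τ g‖² − f_q(qτ)‖g‖² ≤ ∫_{τ/2}^{τ} ‖S t g‖²_{L²(ω)} dt`,
where `f_q(s) = exp(−M(q)/s^{am/(b-a)})`. -/
theorem stmt4 {n : ℕ} (Ω ω : Set (EuclideanSpace ℝ (Fin n)))
    (hΩ : IsOpen Ω) (hω : IsOpen ω) (hωΩ : ω ⊆ Ω)
    (S : ℝ → Lp ℂ 2 (volume.restrict Ω) →L[ℂ] Lp ℂ 2 (volume.restrict Ω))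
    (π : ℕ → Lp ℂ 2 (volume.restrict Ω) →L[ℂ] Lp ℂ 2 (volume.restrict Ω))
    (hS0 : S 0 = ContinuousLinearMap.id ℂ _)
    (hSsemi : ∀ s t : ℝ, 0 ≤ s → 0 ≤ t → S (s + t) = (S s).comp (S t))
    (hScont : ∀ g, ContinuousOn (fun t => S t g) (Set.Ici (0:ℝ)))
    (hScontr : ∀ t : ℝ, 0 ≤ t → ‖S t‖ ≤ 1)
    (hπsa : ∀ k, IsSelfAdjoint (π k))
    (hπidem : ∀ k, IsIdempotentElem (π k))
    (c₁ c₂ a b t₀ m : ℝ)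
    (hc₁ : 0 < c₁) (hc₂ : 0 < c₂) (ha : 0 < a) (hb : 0 < b) (ht₀ : 0 < t₀)
    (hm : 0 < m) (hab : a < b)
    (hspec : ∀ g, ∀ k : ℕ, 1 ≤ k →
      ‖π k g‖ ≤ Real.exp (c₁ * (k : ℝ) ^ a) *
        Real.sqrt (∫ x in ω, ‖(π k g) x‖ ^ 2 ∂volume))
    (hdiss : ∀ g, ∀ k : ℕ, 1 ≤ k → ∀ t : ℝ, 0 < t → t < t₀ →
      ‖S t g - π k (S t g)‖ ≤
        (1 / c₂) * Real.exp (-(c₂ * t ^ m * (k : ℝ) ^ b)) * ‖g‖) :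
    ∀ q : ℝ, 0 < q → ∃ τ₀' M : ℝ, 0 < τ₀' ∧ τ₀' < t₀ ∧ 0 < M ∧
      ∀ τ : ℝ, 0 < τ → τ < τ₀' → ∀ g,
        Real.exp (-(M / τ ^ (a * m / (b - a)))) * ‖S τ g‖ ^ 2 -
            Real.exp (-(M / (q * τ) ^ (a * m / (b - a)))) * ‖g‖ ^ 2 ≤
          ∫ t in (τ / 2)..τ, ∫ x in ω, ‖(S t g) x‖ ^ 2 ∂volume := by
  intro q hq
  have hba : (0:ℝ) < b - a := by linarith
  set γ : ℝ := a * m / (b - a) with hγdef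
  have hγ : 0 < γ := div_pos (mul_pos ha hm) hba
  set ε : ℝ := m / (b - a) with hεdef
  have hε : 0 < ε := div_pos hm hba
  have hεa : ε * a = γ := by field_simp [hγdef, hεdef]; ring
  have hεbm : m - ε * b = -γ := by
    rw [hεdef, hγdef]; field_simp; ring
  set c₆ : ℝ := 2 * c₁ * 2 ^ a + 3 + 1/γ with hc₆def
  have h2a : (0:ℝ) < 2 ^ a := Real.rpow_pos_of_pos two_pos a
  have h1γ' : (0:ℝ) < 1/γ := one_div_pos.mpr hγ
  have hc₆ : 0 < c₆ := by rw [hc₆def]; nlinarith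
  set c₃ : ℝ := 2 * c₂ / 2 ^ m with hc₃def
  have hc₃ : 0 < c₃ := div_pos (by linarith) (Real.rpow_pos_of_pos two_pos m)
  set K : ℝ := max 1 ((c₆ * q ^ (-γ) / c₃) ^ (1/(b-a))) with hKdef
  have hK1 : (1:ℝ) ≤ K := le_max_left _ _
  have hK0 : (0:ℝ) < K := by linarith
  set M : ℝ := 2 * c₁ * (2*K) ^ a + 3 + 1/γ with hMdef
  have h2K0 : (0:ℝ) < (2*K) ^ a := Real.rpow_pos_of_pos (by linarith) a
  have hM0 : 0 < M := by rw [hMdef]; nlinarith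
  -- the key constant inequality
  have hq0 : (0:ℝ) < q ^ (-γ) := Real.rpow_pos_of_pos hq _
  have hKa0 : (0:ℝ) < K ^ a := Real.rpow_pos_of_pos hK0 _
  have hKmain : M * q ^ (-γ) ≤ c₃ * K ^ b := by
    have h2K : (2*K) ^ a = 2 ^ a * K ^ a :=
      Real.mul_rpow (by norm_num) hK0.le
    have hKa1 : (1:ℝ) ≤ K ^ a := Real.one_le_rpow hK1 ha.le
    have hMle : M ≤ c₆ * K ^ a := by
      rw [hMdef, hc₆def, h2K]
      have h1γ : 0 < 1/γ := one_div_pos.mpr hγ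
      nlinarith
    have hKba : c₆ * q ^ (-γ) / c₃ ≤ K ^ (b - a) := by
      have hnn : (0:ℝ) ≤ c₆ * q ^ (-γ) / c₃ := (div_pos (mul_pos hc₆ hq0) hc₃).le
      have h1 : ((c₆ * q ^ (-γ) / c₃) ^ (1/(b-a))) ^ (b-a) = c₆ * q ^ (-γ) / c₃ := by
        rw [← Real.rpow_mul hnn, one_div, inv_mul_cancel₀ hba.ne', Real.rpow_one]
      calc c₆ * q ^ (-γ) / c₃ = ((c₆ * q ^ (-γ) / c₃) ^ (1/(b-a))) ^ (b-a) := h1.symm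
        _ ≤ K ^ (b-a) :=
          Real.rpow_le_rpow (Real.rpow_nonneg hnn _) (le_max_right _ _) hba.le
    have hKb : K ^ b = K ^ a * K ^ (b - a) := by
      rw [← Real.rpow_add hK0]; ring_nf
    have h2 : c₆ * q ^ (-γ) ≤ c₃ * K ^ (b-a) := by
      rw [div_le_iff₀ hc₃] at hKba; linarith
    calc M * q ^ (-γ) ≤ c₆ * K ^ a * q ^ (-γ) := by nlinarith
      _ = (c₆ * q ^ (-γ)) * K ^ a := by ring
      _ ≤ (c₃ * K ^ (b-a)) * K ^ a := by nlinarith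
      _ = c₃ * K ^ b := by rw [hKb]; ring
  refine ⟨min (t₀/2) (min 1 (c₂^2/2)), M,
    lt_min (by linarith) (lt_min one_pos (by nlinarith)), ?_, hM0, ?_⟩
  · calc min (t₀/2) (min 1 (c₂^2/2)) ≤ t₀/2 := min_le_left _ _
      _ < t₀ := by linarith
  intro τ hτ hττ g
  have hτt₀ : τ < t₀ := by
    have := lt_of_lt_of_le hττ (min_le_left _ _); linarith
  have hτ1 : τ ≤ 1 := by
    have := lt_of_lt_of_le hττ ((min_le_right _ _).trans (min_le_left _ _)); linarith
  have hτc₂ : τ ≤ c₂^2/2 := by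
    have := lt_of_lt_of_le hττ ((min_le_right _ _).trans (min_le_right _ _)); linarith
  have hτ2 : 0 < τ / 2 := by linarith
  -- the frequency parameter k
  set x : ℝ := K * τ ^ (-ε) with hxdef
  have hτε : (1:ℝ) ≤ τ ^ (-ε) := by
    have := Real.rpow_le_rpow_of_exponent_ge hτ hτ1 (by linarith : -ε ≤ (0:ℝ))
    rwa [Real.rpow_zero] at this
  have hτε0 : (0:ℝ) < τ ^ (-ε) := Real.rpow_pos_of_pos hτ _
  have hx1 : (1:ℝ) ≤ x := by
    rw [hxdef]
    have := mul_le_mul hK1 hτε zero_le_one hK0.le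
    simpa using this
  set k : ℕ := ⌈x⌉₊ with hkdef
  have hk1 : 1 ≤ k := Nat.one_le_ceil_iff.mpr (by linarith)
  have hkx : x ≤ (k:ℝ) := Nat.le_ceil x
  have hk2x : (k:ℝ) ≤ 2 * x := by
    have := Nat.ceil_lt_add_one (le_trans zero_le_one hx1 : (0:ℝ) ≤ x)
    rw [← hkdef] at this; linarith
  have hτγ0 : (0:ℝ) < τ ^ (-γ) := Real.rpow_pos_of_pos hτ _
  have hτm0 : (0:ℝ) < τ ^ m := Real.rpow_pos_of_pos hτ _
  have hkb0 : (0:ℝ) ≤ (k:ℝ) ^ b := Real.rpow_nonneg (Nat.cast_nonneg k) _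
  have hka : (k:ℝ) ^ a ≤ (2*K) ^ a * τ ^ (-γ) := by
    have h1 : (k:ℝ) ^ a ≤ (2*x) ^ a :=
      Real.rpow_le_rpow (Nat.cast_nonneg k) hk2x ha.le
    have h2 : (2*x) ^ a = (2*K) ^ a * (τ ^ (-ε)) ^ a := by
      rw [hxdef, show 2*(K*τ^(-ε)) = (2*K)*τ^(-ε) by ring,
        Real.mul_rpow (by linarith) hτε0.le]
    have h3 : (τ ^ (-ε)) ^ a = τ ^ (-γ) := by
      rw [← Real.rpow_mul hτ.le, show -ε*a = -γ by rw [← hεa]; ring]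
    rw [h2, h3] at h1; exact h1
  have hkb : K ^ b * τ ^ (-γ) ≤ τ ^ m * (k:ℝ) ^ b := by
    have h1 : x ^ b ≤ (k:ℝ) ^ b :=
      Real.rpow_le_rpow (by linarith) hkx hb.le
    have h2 : x ^ b = K ^ b * τ ^ (-(ε*b)) := by
      rw [hxdef, Real.mul_rpow hK0.le hτε0.le, ← Real.rpow_mul hτ.le]
      ring_nf
    have h3 : τ ^ m * τ ^ (-(ε*b)) = τ ^ (-γ) := by
      rw [← Real.rpow_add hτ, show m + -(ε*b) = -γ by rw [← hεbm]; ring]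
    calc K ^ b * τ ^ (-γ) = τ ^ m * x ^ b := by rw [h2, ← h3]; ring
      _ ≤ τ ^ m * (k:ℝ) ^ b := mul_le_mul_of_nonneg_left h1 hτm0.le
  -- the two scalar inequalities
  set E : ℝ := Real.exp (c₁ * (k:ℝ) ^ a) with hEdef
  have hE1 : 1 ≤ E := Real.one_le_exp
    (mul_nonneg hc₁.le (Real.rpow_nonneg (Nat.cast_nonneg k) a))
  have hE0 : 0 < E := by linarith
  set D : ℝ := (1/c₂) * Real.exp (-(c₂ * (τ/2) ^ m * (k:ℝ) ^ b)) with hDdef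
  have hD0 : 0 < D := mul_pos (one_div_pos.mpr hc₂) (Real.exp_pos _)
  have hIneq1 : Real.exp (-(M / τ ^ γ)) ≤ τ / (4 * E ^ 2) := by
    have hτγeq : M / τ ^ γ = M * τ ^ (-γ) := by
      rw [Real.rpow_neg hτ.le]; ring
    have hE2 : E ^ 2 = Real.exp (2 * (c₁ * (k:ℝ) ^ a)) := by
      rw [hEdef, sq, ← Real.exp_add]; ring_nf
    have key : Real.exp (-(M * τ ^ (-γ))) * E ^ 2 ≤ τ / 4 := by
      rw [hE2, ← Real.exp_add]
      refine (Real.exp_le_exp.mpr ?_).trans (aux_log γ τ hγ hτ hτ1)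
      rw [hMdef]
      have hka' : 2*c₁*((k:ℝ) ^ a) ≤ 2*c₁*((2*K) ^ a * τ ^ (-γ)) :=
        mul_le_mul_of_nonneg_left hka (by linarith)
      linarith [hka']
    rw [hτγeq, show τ / (4 * E ^ 2) = (τ/4) / E ^ 2 by ring,
      le_div_iff₀ (pow_pos hE0 2)]
    exact key
  have hIneq2 : 2 * τ * D ^ 2 ≤ Real.exp (-(M / (q*τ) ^ γ)) := by
    have h1 : M / (q*τ) ^ γ = M * q ^ (-γ) * τ ^ (-γ) := by
      rw [Real.mul_rpow hq.le hτ.le, Real.rpow_neg hq.le, Real.rpow_neg hτ.le,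
        div_eq_mul_inv, mul_inv]
      ring
    have h2 : D ^ 2 = (1/c₂^2) * Real.exp (-(2 * (c₂ * (τ/2) ^ m * (k:ℝ) ^ b))) := by
      rw [hDdef, mul_pow, sq (Real.exp _), ← Real.exp_add]
      ring_nf
    have h5 : (τ/2) ^ m = τ ^ m / 2 ^ m := Real.div_rpow hτ.le (by norm_num) m
    have h2m : (0:ℝ) < 2 ^ m := Real.rpow_pos_of_pos (by norm_num) m
    have h4 : M * q ^ (-γ) * τ ^ (-γ) ≤ 2 * (c₂ * (τ/2) ^ m * (k:ℝ) ^ b) := by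
      have h6 : c₃ * (K ^ b * τ ^ (-γ)) ≤ c₃ * (τ ^ m * (k:ℝ) ^ b) :=
        mul_le_mul_of_nonneg_left hkb hc₃.le
      have h7 : c₃ * (τ ^ m * (k:ℝ) ^ b) = 2 * (c₂ * (τ/2) ^ m * (k:ℝ) ^ b) := by
        rw [h5, hc₃def]; field_simp
      calc M * q ^ (-γ) * τ ^ (-γ) ≤ c₃ * K ^ b * τ ^ (-γ) :=
        mul_le_mul_of_nonneg_right hKmain hτγ0.le
        _ = c₃ * (K ^ b * τ ^ (-γ)) := by ring
        _ ≤ c₃ * (τ ^ m * (k:ℝ) ^ b) := h6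
        _ = _ := h7
    have h3 : 2 * τ * (1/c₂^2) ≤ 1 := by
      rw [mul_one_div, div_le_one (pow_pos hc₂ 2)]
      linarith
    calc 2 * τ * D ^ 2
        = (2 * τ * (1/c₂^2)) * Real.exp (-(2 * (c₂ * (τ/2) ^ m * (k:ℝ) ^ b))) := by
          rw [h2]; ring
      _ ≤ Real.exp (-(2 * (c₂ * (τ/2) ^ m * (k:ℝ) ^ b))) :=
          mul_le_of_le_one_left (Real.exp_pos _).le h3
      _ ≤ Real.exp (-(M / (q*τ) ^ γ)) := Real.exp_le_exp.mpr (by rw [h1]; linarith)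
  -- the restriction operator
  have hNint : ∀ h : Lp ℂ 2 (volume.restrict Ω),
      (∫ y in ω, ‖h y‖ ^ 2 ∂volume) = ‖Rmap (volume.restrict Ω) ω h‖ ^ 2 := by
    intro h
    have hmeas : (volume.restrict Ω).restrict ω = volume.restrict ω := by
      rw [Measure.restrict_restrict hω.measurableSet,
        Set.inter_eq_self_of_subset_left hωΩ]
    rw [← hmeas]
    exact Rmap_int h
  set R : Lp ℂ 2 (volume.restrict Ω) → Lp ℂ 2 ((volume.restrict Ω).restrict ω) :=
    Rmap (volume.restrict Ω) ω with hRdef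
  -- pointwise estimate
  set C : ℝ := ‖S τ g‖ ^ 2 / (2 * E ^ 2) - 4 * (D * ‖g‖) ^ 2 with hCdef
  have key : ∀ t ∈ Set.Icc (τ/2) τ, C ≤ ‖R (S t g)‖ ^ 2 := by
    rintro t ⟨ht1, ht2⟩
    have h0t : 0 < t := lt_of_lt_of_le hτ2 ht1
    have hmono : ‖S τ g‖ ≤ ‖S t g‖ := by
      have hst : S τ = (S (τ - t)).comp (S t) := by
        have h := hSsemi (τ - t) t (by linarith) h0t.le
        rwa [sub_add_cancel] at h
      calc ‖S τ g‖ = ‖(S (τ-t)) ((S t) g)‖ := by rw [hst]; rfl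
        _ ≤ ‖S (τ-t)‖ * ‖(S t) g‖ := (S (τ-t)).le_opNorm _
        _ ≤ 1 * ‖(S t) g‖ :=
            mul_le_mul_of_nonneg_right (hScontr _ (by linarith)) (norm_nonneg _)
        _ = ‖(S t) g‖ := one_mul _
    have hd : ‖S t g - π k (S t g)‖ ≤ D * ‖g‖ := by
      refine (hdiss g k hk1 t h0t (lt_of_le_of_lt ht2 hτt₀)).trans ?_
      rw [hDdef]
      have hexp : Real.exp (-(c₂ * t ^ m * (k:ℝ) ^ b)) ≤
          Real.exp (-(c₂ * (τ/2) ^ m * (k:ℝ) ^ b)) := by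
        apply Real.exp_le_exp.mpr
        have h1 : (τ/2) ^ m ≤ t ^ m := Real.rpow_le_rpow (by linarith) ht1 hm.le
        have h2 := mul_le_mul_of_nonneg_right
          (mul_le_mul_of_nonneg_left h1 hc₂.le) hkb0
        linarith
      exact mul_le_mul_of_nonneg_right
        (mul_le_mul_of_nonneg_left hexp (one_div_pos.mpr hc₂).le)
        (norm_nonneg g)
    have hNspec : ‖π k (S t g)‖ ≤ E * ‖R (π k (S t g))‖ := by
      have h := hspec (S t g) k hk1
      rwa [hNint, Real.sqrt_sq (norm_nonneg _)] at h
    have hNle : ‖R (S t g)‖ ≤ ‖S t g‖ := Rmap_norm_le _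
    have hN0 : (0:ℝ) ≤ ‖R (S t g)‖ := norm_nonneg _
    have hNtri : ‖R (π k (S t g))‖ ≤ ‖R (S t g)‖ + D * ‖g‖ := by
      have h1 : ‖R (π k (S t g))‖ - ‖R (S t g)‖ ≤
          ‖R (π k (S t g)) - R (S t g)‖ := norm_sub_norm_le _ _
      rw [hRdef, Rmap_sub] at h1
      have h2 : ‖Rmap (volume.restrict Ω) ω (π k (S t g) - S t g)‖ ≤
          ‖π k (S t g) - S t g‖ := Rmap_norm_le _
      rw [norm_sub_rev] at h2
      linarith
    have hcomb : ‖S τ g‖ ≤ E * ‖R (S t g)‖ + 2 * E * (D * ‖g‖) := by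
      have h2' : ‖S t g‖ ≤ ‖π k (S t g)‖ + ‖S t g - π k (S t g)‖ := by
        calc ‖S t g‖ = ‖π k (S t g) + (S t g - π k (S t g))‖ := by
              rw [add_sub_cancel]
          _ ≤ _ := norm_add_le _ _
      have hDg : (0:ℝ) ≤ D * ‖g‖ := mul_nonneg hD0.le (norm_nonneg g)
      have h3' : E * ‖R (π k (S t g))‖ ≤ E * (‖R (S t g)‖ + D * ‖g‖) :=
        mul_le_mul_of_nonneg_left hNtri hE0.le
      have h4' : D * ‖g‖ ≤ E * (D * ‖g‖) := le_mul_of_one_le_left hDg hE1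
      linarith
    rw [hCdef, sub_le_iff_le_add, div_le_iff₀ (mul_pos two_pos (pow_pos hE0 2))]
    exact aux_sq _ _ _ _ hE1 (mul_nonneg hD0.le (norm_nonneg g)) (norm_nonneg _) (norm_nonneg _) hcomb
  -- integrate
  have hsub : Set.Icc (τ/2) τ ⊆ Set.Ici (0:ℝ) := fun y hy => le_trans hτ2.le hy.1
  have hFc : ContinuousOn (fun t => ‖R (S t g)‖ ^ 2) (Set.Icc (τ/2) τ) := by
    have h1 : ContinuousOn (fun t => S t g) (Set.Icc (τ/2) τ) := (hScont g).mono hsub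
    have h2 : Continuous R := Rmap_lip.continuous
    exact ((h2.comp_continuousOn h1).norm).pow 2
  have hFi : IntervalIntegrable (fun t => ‖R (S t g)‖ ^ 2) volume (τ/2) τ := by
    apply ContinuousOn.intervalIntegrable
    rwa [Set.uIcc_of_le (by linarith : τ/2 ≤ τ)]
  have hlow : (τ - τ/2) * C ≤ ∫ t in (τ/2)..τ, ‖R (S t g)‖ ^ 2 := by
    have h := intervalIntegral.integral_mono_on (by linarith : τ/2 ≤ τ)
      intervalIntegrable_const hFi key
    rwa [intervalIntegral.integral_const, smul_eq_mul] at h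
  -- conclude
  have hgoalint : (∫ t in (τ/2)..τ, ∫ y in ω, ‖(S t g) y‖ ^ 2 ∂volume)
      = ∫ t in (τ/2)..τ, ‖R (S t g)‖ ^ 2 := by
    refine intervalIntegral.integral_congr fun t _ => ?_
    exact hNint (S t g)
  have hA : Real.exp (-(M / τ ^ γ)) * ‖S τ g‖ ^ 2 ≤ τ / (4 * E ^ 2) * ‖S τ g‖ ^ 2 :=
    mul_le_mul_of_nonneg_right hIneq1 (sq_nonneg _)
  have hB : 2 * τ * D ^ 2 * ‖g‖ ^ 2 ≤ Real.exp (-(M / (q*τ) ^ γ)) * ‖g‖ ^ 2 :=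
    mul_le_mul_of_nonneg_right hIneq2 (sq_nonneg _)
  have hCeq : (τ - τ/2) * C
      = τ / (4 * E ^ 2) * ‖S τ g‖ ^ 2 - 2 * τ * D ^ 2 * ‖g‖ ^ 2 := by
    rw [hCdef]; field_simp; ring
  rw [hgoalint]
  linarith
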